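/- arXiv:1708.09196 — 4 statements merged into one kernel-verified Lean document; each statement's English description precedes it below -/
import Mathlib

section
/- (Halmos dilation) Let A be an n×n complex matrix with ‖A‖ ≤ 1. Then the 2n×2n block matrix U = [[A, (I − A A†)^{1/2}], [(I − A† A)^{1/2}, −A†]] is unitary, where (I − A A†)^{1/2} and (I − A† A)^{1/2} denote the positive semidefinite square roots of the positive semidefinite matrices I − A A† and I − A† A. -/
open Matrix
open scoped Matrix.Norms.L2Operator ComplexOrder

open Polynomial in
/-- Semiconjugation passes to polynomial evaluation. -/
lemma halmos_aux_semiconj_aeval {n : ℕ} (A X Y : Matrix (Fin n) (Fin n) ℂ)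
    (h : A * X = Y * A) (p : ℝ[X]) :
    A * Polynomial.aeval X p = Polynomial.aeval Y p * A := by
  have hpow : ∀ m : ℕ, A * X ^ m = Y ^ m * A := by
    intro m
    induction m with
    | zero => simp
    | succ m ih =>
        rw [pow_succ, pow_succ, ← mul_assoc, ih, mul_assoc, h, ← mul_assoc]
  rw [Polynomial.aeval_eq_sum_range, Polynomial.aeval_eq_sum_range,
    Finset.mul_sum, Finset.sum_mul]
  exact Finset.sum_congr rfl fun k _ => by
    rw [Matrix.mul_smul, Matrix.smul_mul, hpow k]

open Polynomial in
lemma halmos_aux_aeval_diagonal {n : ℕ} (d : Fin n → ℂ) (p : ℝ[X]) :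
    Polynomial.aeval (Matrix.diagonal d) p
      = Matrix.diagonal (fun i => Polynomial.aeval (d i) p) := by
  have h := Polynomial.aeval_algHom_apply
    (Matrix.diagonalAlgHom (n := Fin n) (α := ℂ) ℝ) d p
  simp only [Matrix.diagonalAlgHom_apply] at h
  have h2 : (Polynomial.aeval d p : Fin n → ℂ) = fun i => Polynomial.aeval (d i) p :=
    funext fun i => (Polynomial.aeval_algHom_apply (Pi.evalAlgHom ℝ (fun _ => ℂ) i) d p).symm
  rw [h, h2]

open Polynomial in
/-- If a real polynomial sends the square of each eigenvalue of a psd matrix `S`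
to that eigenvalue, then `p (S * S) = S`. -/
lemma halmos_aux_aeval_sq {n : ℕ} (S : Matrix (Fin n) (Fin n) ℂ) (hS : S.PosSemidef)
    (p : ℝ[X]) (hp : ∀ i, p.eval ((hS.1.eigenvalues i) ^ 2) = hS.1.eigenvalues i) :
    Polynomial.aeval (S * S) p = S := by
  set U : Matrix (Fin n) (Fin n) ℂ := (hS.1.eigenvectorUnitary : Matrix (Fin n) (Fin n) ℂ)
    with hU
  have hU1 : U * star U = 1 := Matrix.mem_unitaryGroup_iff.mp hS.1.eigenvectorUnitary.2
  have hU2 : star U * U = 1 := mul_eq_one_comm.mp hU1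
  set D : Matrix (Fin n) (Fin n) ℂ :=
    Matrix.diagonal (RCLike.ofReal ∘ hS.1.eigenvalues) with hD
  have hspec : S = U * D * star U := hS.1.spectral_theorem
  let φ : Matrix (Fin n) (Fin n) ℂ →ₐ[ℝ] Matrix (Fin n) (Fin n) ℂ :=
    { toFun := fun M => U * M * star U
      map_one' := by show U * 1 * star U = 1; rw [mul_one, hU1]
      map_mul' := fun x y => by
        calc U * (x * y) * star U
            = U * x * (star U * U) * y * star U := by rw [hU2]; noncomm_ring
          _ = U * x * star U * (U * y * star U) := by noncomm_ring
      map_zero' := by simp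
      map_add' := fun x y => by noncomm_ring
      commutes' := fun r => by
        simp only [Algebra.algebraMap_eq_smul_one]
        rw [Matrix.mul_smul, mul_one, Matrix.smul_mul, hU1] }
  have hsq : S * S = φ (D * D) := by
    show S * S = U * (D * D) * star U
    rw [hspec]
    calc (U * D * star U) * (U * D * star U)
        = U * D * (star U * U) * D * star U := by noncomm_ring
      _ = U * (D * D) * star U := by rw [hU2]; noncomm_ring
  have hDD : D * D = Matrix.diagonal fun i => ((hS.1.eigenvalues i ^ 2 : ℝ) : ℂ) := by
    rw [hD, Matrix.diagonal_mul_diagonal]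
    refine congrArg Matrix.diagonal (funext fun i => ?_)
    simp only [Function.comp_apply]
    rw [sq]
    exact (RCLike.ofReal_mul _ _).symm
  rw [hsq, Polynomial.aeval_algHom_apply φ, hDD, halmos_aux_aeval_diagonal]
  have hdiag : (Matrix.diagonal fun i =>
      Polynomial.aeval ((hS.1.eigenvalues i ^ 2 : ℝ) : ℂ) p) = D := by
    rw [hD]
    refine congrArg Matrix.diagonal (funext fun i => ?_)
    have h3 : ((hS.1.eigenvalues i ^ 2 : ℝ) : ℂ) = algebraMap ℝ ℂ (hS.1.eigenvalues i ^ 2) :=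
      rfl
    rw [h3, Polynomial.aeval_algebraMap_apply_eq_algebraMap_eval, hp i]
    rfl
  rw [hdiag]
  exact hspec.symm

/-- (Halmos dilation) Let `A` be an `n × n` complex contraction, `‖A‖ ≤ 1`.  If `S₁` and
`S₂` are the positive semidefinite square roots of `1 - A * Aᴴ` and `1 - Aᴴ * A`
respectively, then the `2n × 2n` block matrix `[[A, S₁], [S₂, -Aᴴ]]` is unitary. -/
theorem halmos_dilation_unitary {n : ℕ} (A : Matrix (Fin n) (Fin n) ℂ) (hA : ‖A‖ ≤ 1)
    (S₁ S₂ : Matrix (Fin n) (Fin n) ℂ)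
    (hS₁ : S₁.PosSemidef) (hS₁sq : S₁ * S₁ = 1 - A * Aᴴ)
    (hS₂ : S₂.PosSemidef) (hS₂sq : S₂ * S₂ = 1 - Aᴴ * A) :
    Matrix.fromBlocks A S₁ S₂ (-Aᴴ) * (Matrix.fromBlocks A S₁ S₂ (-Aᴴ))ᴴ = 1 := by
  classical
  -- the interpolation node set
  set s : Finset ℝ :=
    (Finset.univ.image fun i => (hS₁.1.eigenvalues i) ^ 2) ∪
    (Finset.univ.image fun i => (hS₂.1.eigenvalues i) ^ 2) with hs
  set p : Polynomial ℝ := Lagrange.interpolate s id Real.sqrt with hpdef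
  have hnode : ∀ x ∈ s, p.eval x = Real.sqrt x := by
    intro x hx
    simpa [hpdef] using Lagrange.eval_interpolate_at_node Real.sqrt (Set.injOn_id _) hx
  have hp₁ : ∀ i, p.eval ((hS₁.1.eigenvalues i) ^ 2) = hS₁.1.eigenvalues i := by
    intro i
    rw [hnode _ (Finset.mem_union_left _ (Finset.mem_image_of_mem _ (Finset.mem_univ i))),
      Real.sqrt_sq (hS₁.eigenvalues_nonneg i)]
  have hp₂ : ∀ i, p.eval ((hS₂.1.eigenvalues i) ^ 2) = hS₂.1.eigenvalues i := by
    intro i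
    rw [hnode _ (Finset.mem_union_right _ (Finset.mem_image_of_mem _ (Finset.mem_univ i))),
      Real.sqrt_sq (hS₂.eigenvalues_nonneg i)]
  have hS₁p : Polynomial.aeval (S₁ * S₁) p = S₁ := halmos_aux_aeval_sq S₁ hS₁ p hp₁
  have hS₂p : Polynomial.aeval (S₂ * S₂) p = S₂ := halmos_aux_aeval_sq S₂ hS₂ p hp₂
  -- the intertwining relation
  have hsemi : A * (S₂ * S₂) = (S₁ * S₁) * A := by
    rw [hS₁sq, hS₂sq]; noncomm_ring
  have hAS : A * S₂ = S₁ * A := by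
    rw [← hS₁p, ← hS₂p]
    exact halmos_aux_semiconj_aeval A _ _ hsemi p
  have hAS' : S₂ * Aᴴ = Aᴴ * S₁ := by
    have := congrArg Matrix.conjTranspose hAS
    simpa [Matrix.conjTranspose_mul, hS₁.1.eq, hS₂.1.eq] using this
  rw [Matrix.fromBlocks_conjTranspose, Matrix.fromBlocks_multiply]
  have h11 : A * Aᴴ + S₁ * S₁ᴴ = 1 := by
    rw [hS₁.1.eq, hS₁sq]; noncomm_ring
  have h12 : A * S₂ᴴ + S₁ * (-Aᴴ)ᴴ = 0 := by
    rw [hS₂.1.eq, Matrix.conjTranspose_neg, Matrix.conjTranspose_conjTranspose, hAS]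
    noncomm_ring
  have h21 : S₂ * Aᴴ + -Aᴴ * S₁ᴴ = 0 := by
    rw [hS₁.1.eq, hAS']
    noncomm_ring
  have h22 : S₂ * S₂ᴴ + -Aᴴ * (-Aᴴ)ᴴ = 1 := by
    rw [hS₂.1.eq, hS₂sq, Matrix.conjTranspose_neg, Matrix.conjTranspose_conjTranspose]
    noncomm_ring
  rw [h11, h12, h21, h22, Matrix.fromBlocks_one]
end

section
/- Let A be a k×k complex contraction (‖A‖ ≤ 1) and set m = rank(I − A† A). Then the minimal dimension n for which A occurs as a principal submatrix of an n×n unitary matrix is n = k + m: there exists a (k+m)×(k+m) unitary matrix having A as a principal submatrix, and no n×n unitary matrix with n < k + m has A as a principal submatrix. -/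
open Matrix
open scoped Matrix.Norms.L2Operator

section Aux

open scoped ComplexOrder

lemma aux_ker_le {k : ℕ} (A : Matrix (Fin k) (Fin k) ℂ) :
    Module.finrank ℂ (LinearMap.ker (1 - Aᴴ * A).mulVecLin) ≤
      Module.finrank ℂ (LinearMap.ker (1 - A * Aᴴ).mulVecLin) := by
  have h : ∀ x ∈ LinearMap.ker (1 - Aᴴ * A).mulVecLin,
      A.mulVecLin x ∈ LinearMap.ker (1 - A * Aᴴ).mulVecLin := by
    intro x hx
    simp only [LinearMap.mem_ker, mulVecLin_apply, sub_mulVec, one_mulVec, sub_eq_zero] at hx ⊢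
    rw [mulVec_mulVec, mul_assoc, ← mulVec_mulVec, ← hx]
  have hinj : Function.Injective ((A.mulVecLin).restrict h) := by
    intro x y hxy
    have hx := x.2; have hy := y.2
    simp only [LinearMap.mem_ker, mulVecLin_apply, sub_mulVec, one_mulVec, sub_eq_zero] at hx hy
    have : A *ᵥ (x : Fin k → ℂ) = A *ᵥ (y : Fin k → ℂ) := congrArg Subtype.val hxy
    ext1
    rw [hx, hy, ← mulVec_mulVec, ← mulVec_mulVec, this]
  exact LinearMap.finrank_le_finrank_of_injective hinj

lemma aux_rank_symm {k : ℕ} (A : Matrix (Fin k) (Fin k) ℂ) :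
    (1 - Aᴴ * A).rank = (1 - A * Aᴴ).rank := by
  have hk : ∀ B : Matrix (Fin k) (Fin k) ℂ,
      Module.finrank ℂ (LinearMap.ker (1 - Bᴴ * B).mulVecLin) =
      Module.finrank ℂ (LinearMap.ker (1 - B * Bᴴ).mulVecLin) := by
    intro B
    refine le_antisymm (aux_ker_le B) ?_
    have := aux_ker_le Bᴴ
    rwa [conjTranspose_conjTranspose] at this
  have h1 := LinearMap.finrank_range_add_finrank_ker (1 - Aᴴ * A).mulVecLin
  have h2 := LinearMap.finrank_range_add_finrank_ker (1 - A * Aᴴ).mulVecLin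
  have h3 := hk A
  rw [Matrix.rank, Matrix.rank]
  omega

lemma aux_psd {k : ℕ} (A : Matrix (Fin k) (Fin k) ℂ) (hA : ‖A‖ ≤ 1) :
    (1 - Aᴴ * A).PosSemidef := by
  rw [posSemidef_iff_dotProduct_mulVec]
  constructor
  · simp [Matrix.IsHermitian, conjTranspose_sub, conjTranspose_mul]
  · intro x
    have key : star x ⬝ᵥ ((1 - Aᴴ * A) *ᵥ x)
        = star x ⬝ᵥ x - star (A *ᵥ x) ⬝ᵥ (A *ᵥ x) := by
      rw [sub_mulVec, dotProduct_sub, one_mulVec, star_mulVec, ← dotProduct_mulVec, mulVec_mulVec]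
    rw [key]
    set x' : EuclideanSpace ℂ (Fin k) := (EuclideanSpace.equiv (Fin k) ℂ).symm x with hx'
    set y' : EuclideanSpace ℂ (Fin k) := (EuclideanSpace.equiv (Fin k) ℂ).symm (A *ᵥ x) with hy'
    have h1 : star x ⬝ᵥ x = inner (𝕜 := ℂ) x' x' := by
      rw [hx', PiLp.inner_apply]; simp [dotProduct, mul_comm, Complex.mul_conj']
    have h2 : star (A *ᵥ x) ⬝ᵥ (A *ᵥ x) = inner (𝕜 := ℂ) y' y' := by
      rw [hy', PiLp.inner_apply]; simp [dotProduct, mul_comm, Complex.mul_conj']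
    have h3 : ‖y'‖ ≤ ‖x'‖ := by
      calc ‖y'‖ ≤ ‖A‖ * ‖x'‖ := A.l2_opNorm_mulVec x'
        _ ≤ 1 * ‖x'‖ := mul_le_mul_of_nonneg_right hA (norm_nonneg _)
        _ = ‖x'‖ := one_mul _
    rw [h1, h2, inner_self_eq_norm_sq_to_K, inner_self_eq_norm_sq_to_K]
    have hr : (0:ℝ) ≤ ‖x'‖^2 - ‖y'‖^2 := by nlinarith [norm_nonneg x', norm_nonneg y']
    calc (0:ℂ) ≤ ((‖x'‖^2 - ‖y'‖^2 : ℝ) : ℂ) := RCLike.ofReal_nonneg.mpr hr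
      _ = _ := by push_cast; rfl

lemma aux_factor {k : ℕ} (M : Matrix (Fin k) (Fin k) ℂ) (hM : M.PosSemidef) :
    ∃ C : Matrix (Fin M.rank) (Fin k) ℂ, Cᴴ * C = M := by
  have hH := hM.1
  have hcard : Fintype.card {i // hH.eigenvalues i ≠ 0} = M.rank :=
    hH.rank_eq_card_non_zero_eigs.symm
  let e : Fin M.rank ≃ {i // hH.eigenvalues i ≠ 0} := (Fintype.equivFinOfCardEq hcard).symm
  set V : Matrix (Fin k) (Fin k) ℂ := (hH.eigenvectorUnitary : Matrix (Fin k) (Fin k) ℂ) with hV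
  refine ⟨Matrix.of fun a j => (Real.sqrt (hH.eigenvalues (e a)) : ℂ) * star (V j (e a)), ?_⟩
  ext i j
  have hMij : M i j = ∑ l, (hH.eigenvalues l : ℂ) * (V i l * star (V j l)) := by
    conv_lhs => rw [hH.spectral_theorem, Unitary.conjStarAlgAut_apply]
    rw [Matrix.mul_apply]
    refine Finset.sum_congr rfl fun l _ => ?_
    rw [Matrix.mul_diagonal, Matrix.star_apply]
    simp only [Function.comp_apply, ← hV]
    rw [show (RCLike.ofReal (hH.eigenvalues l) : ℂ) = ((hH.eigenvalues l : ℝ) : ℂ) from rfl]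
    ring
  rw [hMij, Matrix.mul_apply]
  have hterm : ∀ a : Fin M.rank, (Matrix.of fun a j =>
        (Real.sqrt (hH.eigenvalues (e a)) : ℂ) * star (V j (e a)))ᴴ i a *
      (Matrix.of fun a j => (Real.sqrt (hH.eigenvalues (e a)) : ℂ) * star (V j (e a))) a j
      = (hH.eigenvalues (e a) : ℂ) * (V i (e a) * star (V j (e a))) := by
    intro a
    have h1 : star ((Real.sqrt (hH.eigenvalues (e a)) : ℂ))
        = (Real.sqrt (hH.eigenvalues (e a)) : ℂ) := by
      rw [Complex.star_def, Complex.conj_ofReal]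
    have h2 : ((Real.sqrt (hH.eigenvalues (e a)) : ℂ)) * (Real.sqrt (hH.eigenvalues (e a)) : ℂ)
        = ((hH.eigenvalues (e a) : ℝ) : ℂ) := by
      norm_cast; exact Real.mul_self_sqrt (hM.eigenvalues_nonneg _)
    simp only [Matrix.conjTranspose_apply, Matrix.of_apply, star_mul', star_star, h1]
    rw [show (Real.sqrt (hH.eigenvalues (e a)) : ℂ) * V i (e a) *
        ((Real.sqrt (hH.eigenvalues (e a)) : ℂ) * star (V j (e a)))
        = ((Real.sqrt (hH.eigenvalues (e a)) : ℂ) * (Real.sqrt (hH.eigenvalues (e a)) : ℂ)) *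
          (V i (e a) * star (V j (e a))) from by ring, h2]
  rw [Finset.sum_congr rfl fun a _ => hterm a]
  rw [Fintype.sum_equiv e _ (fun s => (hH.eigenvalues s : ℂ) * (V i s * star (V j s)))
    (fun a => rfl)]
  rw [← Finset.sum_subtype (Finset.univ.filter (fun l => hH.eigenvalues l ≠ 0)) (by simp)
    (fun l => (hH.eigenvalues l : ℂ) * (V i l * star (V j l)))]
  refine Finset.sum_subset (Finset.filter_subset _ _) fun l _ hl => ?_
  simp only [Finset.mem_filter, Finset.mem_univ, true_and, not_not] at hl
  simp [hl]

end Aux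

/-- Let `A` be a `k × k` complex contraction and `m = rank (1 - Aᴴ * A)`.  Then the minimal
dimension `n` for which `A` occurs as a principal submatrix of an `n × n` unitary matrix is
`n = k + m`: there is a `(k + m) × (k + m)` unitary matrix having `A` as a principal
submatrix, and no `n × n` unitary matrix with `n < k + m` has `A` as a principal
submatrix. -/
theorem minimal_unitary_dilation_dimension {k : ℕ} (A : Matrix (Fin k) (Fin k) ℂ)
    (hA : ‖A‖ ≤ 1) :
    (∃ U : Matrix (Fin (k + (1 - Aᴴ * A).rank)) (Fin (k + (1 - Aᴴ * A).rank)) ℂ,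
        U * Uᴴ = 1 ∧ ∃ f : Fin k ↪ Fin (k + (1 - Aᴴ * A).rank), A = U.submatrix f f) ∧
    (∀ n : ℕ, n < k + (1 - Aᴴ * A).rank → ∀ U : Matrix (Fin n) (Fin n) ℂ, U * Uᴴ = 1 →
        ∀ f : Fin k ↪ Fin n, A ≠ U.submatrix f f) := by
  set m := (1 - Aᴴ * A).rank with hm
  constructor
  · -- existence
    obtain ⟨C, hC⟩ := aux_factor (1 - Aᴴ * A) (aux_psd A hA)
    let col : Fin k → EuclideanSpace ℂ (Fin (k + m)) := fun j =>
      WithLp.toLp 2 (fun i => Fin.addCases (fun i' => A i' j) (fun i' => C i' j) i)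
    let v : Fin (k + m) → EuclideanSpace ℂ (Fin (k + m)) := fun x =>
      Fin.addCases (fun j => col j) (fun _ => 0) x
    have hinner : ∀ j j' : Fin k,
        inner (𝕜 := ℂ) (col j) (col j') = if j = j' then (1:ℂ) else 0 := by
      intro j j'
      rw [PiLp.inner_apply]
      simp only [RCLike.inner_apply]
      rw [Finset.sum_congr rfl fun i _ => mul_comm ((col j').ofLp i) _]
      have hsplit : ∑ i : Fin (k + m),
          (starRingEnd ℂ) (col j i) * col j' i
          = ∑ i : Fin k, (starRingEnd ℂ) (col j (Fin.castAdd m i)) * col j' (Fin.castAdd m i)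
          + ∑ i : Fin m, (starRingEnd ℂ) (col j (Fin.natAdd k i)) * col j' (Fin.natAdd k i) :=
        Fin.sum_univ_add _
      rw [hsplit]
      have e1 : ∑ i : Fin k, (starRingEnd ℂ) (col j (Fin.castAdd m i)) * col j' (Fin.castAdd m i)
          = (Aᴴ * A) j j' := by
        rw [Matrix.mul_apply]
        refine Finset.sum_congr rfl fun i _ => ?_
        simp [col, Matrix.conjTranspose_apply]
      have e2 : ∑ i : Fin m, (starRingEnd ℂ) (col j (Fin.natAdd k i)) * col j' (Fin.natAdd k i)
          = (Cᴴ * C) j j' := by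
        rw [Matrix.mul_apply]
        refine Finset.sum_congr rfl fun i _ => ?_
        simp [col, Matrix.conjTranspose_apply]
      rw [e1, e2, hC, Matrix.sub_apply, Matrix.one_apply]
      split_ifs <;> ring
    have hv : Orthonormal ℂ
        ((Set.range (Fin.castAdd m : Fin k → Fin (k + m))).restrict v) := by
      rw [orthonormal_iff_ite]
      rintro ⟨_, j, rfl⟩ ⟨_, j', rfl⟩
      show inner ℂ (v (Fin.castAdd m j)) (v (Fin.castAdd m j')) = _
      have hvj : ∀ j : Fin k, v (Fin.castAdd m j) = col j := fun j => by
        simp [v]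
      rw [hvj j, hvj j', hinner j j']
      congr 1
      simp [Subtype.ext_iff, (Fin.castAdd_injective k m).eq_iff]
    have hdim : Module.finrank ℂ (EuclideanSpace ℂ (Fin (k + m))) = Fintype.card (Fin (k + m)) := by
      simp
    obtain ⟨b, hb⟩ := hv.exists_orthonormalBasis_extension_of_card_eq hdim
    refine ⟨Matrix.of fun i j => b j i, ?_, ⟨Fin.castAdd m, Fin.castAdd_injective k m⟩, ?_⟩
    · rw [mul_eq_one_comm]
      ext j j'
      rw [Matrix.mul_apply, Matrix.one_apply]
      have : ∑ i, (Matrix.of fun i j => b j i)ᴴ j i * (Matrix.of fun i j => b j i) i j'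
          = inner (𝕜 := ℂ) (b j) (b j') := by
        rw [PiLp.inner_apply]
        refine Finset.sum_congr rfl fun i _ => ?_
        simp [Matrix.conjTranspose_apply, RCLike.inner_apply, mul_comm]
      rw [this, orthonormal_iff_ite.mp b.orthonormal j j']
    · ext i j
      have hbj : b (Fin.castAdd m j) = v (Fin.castAdd m j) :=
        hb _ ⟨j, rfl⟩
      simp only [Matrix.submatrix_apply, Function.Embedding.coeFn_mk, Matrix.of_apply]
      rw [hbj]
      simp [v, col]
  · -- minimality
    intro n hn U hU f hf
    have hkn : k ≤ n := by
      simpa using Fintype.card_le_of_embedding f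
    classical
    set t : Finset (Fin n) := Finset.univ \ Finset.univ.image f with ht
    have hcardt : t.card = n - k := by
      rw [ht, Finset.card_sdiff_of_subset (Finset.subset_univ _), Finset.card_univ,
        Finset.card_image_of_injective _ f.injective]
      simp
    set B : Matrix (Fin k) ↥t ℂ := Matrix.of fun i l => U (f i) (l : Fin n) with hB
    have key : A * Aᴴ + B * Bᴴ = 1 := by
      ext i j
      have h1 : (1 : Matrix (Fin k) (Fin k) ℂ) i j = (U * Uᴴ) (f i) (f j) := by
        rw [hU, Matrix.one_apply, Matrix.one_apply]
        simp [f.injective.eq_iff]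
      rw [Matrix.add_apply, h1]
      rw [show (U * Uᴴ) (f i) (f j) = ∑ l : Fin n, U (f i) l * (Uᴴ) l (f j) from
        Matrix.mul_apply]
      have himg : ∑ l ∈ Finset.univ.image f, U (f i) l * (Uᴴ) l (f j)
          = (A * Aᴴ) i j := by
        rw [Finset.sum_image (fun x _ y _ h => f.injective h), Matrix.mul_apply]
        refine Finset.sum_congr rfl fun i' _ => ?_
        have hA1 : A i i' = U (f i) (f i') := by rw [hf]; rfl
        have hA2 : A j i' = U (f j) (f i') := by rw [hf]; rfl
        simp [Matrix.conjTranspose_apply, hA1, hA2]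
      have hcompl : ∑ l ∈ t, U (f i) l * (Uᴴ) l (f j) = (B * Bᴴ) i j := by
        rw [Matrix.mul_apply, ← Finset.sum_coe_sort t]
        refine Finset.sum_congr rfl fun l _ => ?_
        simp [hB, Matrix.conjTranspose_apply]
      have hsum : ∑ l : Fin n, U (f i) l * (Uᴴ) l (f j)
          = ∑ l ∈ Finset.univ.image f, U (f i) l * (Uᴴ) l (f j)
          + ∑ l ∈ t, U (f i) l * (Uᴴ) l (f j) := by
        rw [ht, ← Finset.sum_sdiff (Finset.subset_univ (Finset.univ.image f))]
        ring
      rw [hsum, himg, hcompl]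
    have hsub : 1 - A * Aᴴ = B * Bᴴ := by
      rw [← key]; abel
    have hrank : (1 - A * Aᴴ).rank ≤ n - k := by
      rw [hsub]
      calc (B * Bᴴ).rank ≤ B.rank := Matrix.rank_mul_le_left B Bᴴ
        _ ≤ Fintype.card ↥t := Matrix.rank_le_card_width B
        _ = t.card := Fintype.card_coe t
        _ = n - k := hcardt
    have hms : m = (1 - A * Aᴴ).rank := by rw [hm, aux_rank_symm]
    omega
end

section
/- Let θ_1, θ_2 be real numbers and let U be the real 2×2 matrix U = [[cos θ_1, sin θ_1], [−sin θ_2, cos θ_2]]. Then ‖U Uᵀ‖ = 1 + |sin(θ_1 − θ_2)|, and hence ‖U‖² = 1 + |sin(θ_1 − θ_2)| ≥ 1. In particular, ‖U‖ > 1 whenever sin(θ_1 − θ_2) ≠ 0, so U is a contraction only if sin(θ_1 − θ_2) = 0. -/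
open Matrix
open scoped Matrix.Norms.L2Operator

set_option maxHeartbeats 1000000 in
lemma sym_norm (s : ℝ) : ‖(!![1, s; s, 1] : Matrix (Fin 2) (Fin 2) ℝ)‖ = 1 + |s| := by
  rw [Matrix.l2_opNorm_def]
  have key : ∀ x : EuclideanSpace ℝ (Fin 2),
      (LinearEquiv.trans Matrix.toEuclideanLin LinearMap.toContinuousLinearMap
        (!![1, s; s, 1] : Matrix (Fin 2) (Fin 2) ℝ)) x =
      (WithLp.equiv 2 (Fin 2 → ℝ)).symm ![x 0 + s * x 1, s * x 0 + x 1] := by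
    intro x
    rw [LinearEquiv.trans_apply, LinearMap.coe_toContinuousLinearMap',
      Matrix.toEuclideanLin_apply]
    congr 1
    funext i
    fin_cases i <;>
      simp [Matrix.mulVec, dotProduct, Fin.sum_univ_two]
  have hnorm : ∀ x : EuclideanSpace ℝ (Fin 2),
      ‖(LinearEquiv.trans Matrix.toEuclideanLin LinearMap.toContinuousLinearMap
        (!![1, s; s, 1] : Matrix (Fin 2) (Fin 2) ℝ)) x‖ =
      Real.sqrt ((x 0 + s * x 1) ^ 2 + (s * x 0 + x 1) ^ 2) := by
    intro x
    rw [key x, EuclideanSpace.norm_eq]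
    simp [Fin.sum_univ_two, sq_abs]
  have hxn : ∀ x : EuclideanSpace ℝ (Fin 2), ‖x‖ = Real.sqrt (x 0 ^ 2 + x 1 ^ 2) := by
    intro x
    rw [EuclideanSpace.norm_eq]
    simp [Fin.sum_univ_two, sq_abs]
  refine ContinuousLinearMap.opNorm_eq_of_bounds (by positivity) (fun x => ?_) (fun N hN h => ?_)
  · rw [hnorm x, hxn x]
    rw [show (1 + |s|) * Real.sqrt (x 0 ^ 2 + x 1 ^ 2)
        = Real.sqrt ((1 + |s|) ^ 2 * (x 0 ^ 2 + x 1 ^ 2)) by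
      rw [Real.sqrt_mul (by positivity), Real.sqrt_sq (by positivity)]]
    apply Real.sqrt_le_sqrt
    have habs : |s| ^ 2 = s ^ 2 := sq_abs s
    rcases abs_cases s with ⟨hs, _⟩ | ⟨hs, _⟩ <;>
      nlinarith [sq_nonneg (x 0 - x 1), sq_nonneg (x 0 + x 1)]
  · set σ : ℝ := if 0 ≤ s then 1 else -1 with hσ
    set v : EuclideanSpace ℝ (Fin 2) := (WithLp.equiv 2 (Fin 2 → ℝ)).symm ![1, σ] with hv
    have hv0 : v 0 = 1 := rfl
    have hv1 : v 1 = σ := rfl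
    have hσsq : σ ^ 2 = 1 := by rcases le_or_gt 0 s with h' | h' <;> simp [hσ, h']
    have hσs : σ * s = |s| := by
      rcases le_or_gt 0 s with h' | h' <;>
        simp [hσ, h', abs_of_nonneg, abs_of_neg]
    have hvn : ‖v‖ = Real.sqrt 2 := by
      rw [hxn v, hv0, hv1, hσsq]; norm_num
    have := h v
    rw [hnorm v, hv0, hv1] at this
    have harg : (1 + s * σ) ^ 2 + (s * 1 + σ) ^ 2 = (1 + |s|) ^ 2 * 2 := by
      have hs : s * σ = |s| := by rw [mul_comm]; exact hσs
      have habs : |s| ^ 2 = s ^ 2 := sq_abs s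
      nlinarith [hσs, hσsq]
    rw [harg] at this
    rw [Real.sqrt_mul (by positivity), Real.sqrt_sq (by positivity), hvn] at this
    have h2 : (0:ℝ) < Real.sqrt 2 := by positivity
    exact le_of_mul_le_mul_right this h2

/-- For `U = [[cos θ₁, sin θ₁], [-sin θ₂, cos θ₂]]` one has
`‖U * Uᵀ‖ = 1 + |sin (θ₁ - θ₂)|`, hence `‖U‖² = 1 + |sin (θ₁ - θ₂)| ≥ 1`; in particular
`‖U‖ > 1` whenever `sin (θ₁ - θ₂) ≠ 0`, so `U` is a contraction only if
`sin (θ₁ - θ₂) = 0`. -/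
theorem toy_mixing_matrix_norm (θ₁ θ₂ : ℝ) :
    ‖(!![Real.cos θ₁, Real.sin θ₁; -Real.sin θ₂, Real.cos θ₂]) *
        (!![Real.cos θ₁, Real.sin θ₁; -Real.sin θ₂, Real.cos θ₂])ᵀ‖ =
      1 + |Real.sin (θ₁ - θ₂)| ∧
    ‖(!![Real.cos θ₁, Real.sin θ₁; -Real.sin θ₂, Real.cos θ₂] : Matrix (Fin 2) (Fin 2) ℝ)‖ ^ 2 =
      1 + |Real.sin (θ₁ - θ₂)| ∧
    1 ≤ ‖(!![Real.cos θ₁, Real.sin θ₁; -Real.sin θ₂, Real.cos θ₂] : Matrix (Fin 2) (Fin 2) ℝ)‖ ^ 2 ∧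
    (Real.sin (θ₁ - θ₂) ≠ 0 →
      1 < ‖(!![Real.cos θ₁, Real.sin θ₁; -Real.sin θ₂, Real.cos θ₂] : Matrix (Fin 2) (Fin 2) ℝ)‖) ∧
    (‖(!![Real.cos θ₁, Real.sin θ₁; -Real.sin θ₂, Real.cos θ₂] : Matrix (Fin 2) (Fin 2) ℝ)‖ ≤ 1 →
      Real.sin (θ₁ - θ₂) = 0) := by
  set U : Matrix (Fin 2) (Fin 2) ℝ := !![Real.cos θ₁, Real.sin θ₁; -Real.sin θ₂, Real.cos θ₂]
    with hUdef
  have hUUt : U * Uᵀ = !![1, Real.sin (θ₁ - θ₂); Real.sin (θ₁ - θ₂), 1] := by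
    ext i j
    fin_cases i <;> fin_cases j <;>
      simp [hUdef, Matrix.mul_apply, Fin.sum_univ_two, Real.sin_sub, Matrix.vecHead,
        Matrix.vecTail, Matrix.transpose_apply] <;>
      nlinarith [Real.sin_sq_add_cos_sq θ₁, Real.sin_sq_add_cos_sq θ₂]
  have h1 : ‖U * Uᵀ‖ = 1 + |Real.sin (θ₁ - θ₂)| := by rw [hUUt, sym_norm]
  have hT : Uᵀ = Uᴴ := by
    ext i j; simp [Matrix.conjTranspose_apply]
  have h2 : ‖U‖ ^ 2 = 1 + |Real.sin (θ₁ - θ₂)| := by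
    have := Matrix.l2_opNorm_conjTranspose_mul_self (Uᵀ)
    rw [show (Uᵀ)ᴴ = U from by ext i j; simp [Matrix.conjTranspose_apply]] at this
    have hTU : ‖Uᵀ‖ = ‖U‖ := by rw [hT]; exact Matrix.l2_opNorm_conjTranspose U
    rw [hTU] at this
    rw [sq, ← this, h1]
  have habs : 0 ≤ |Real.sin (θ₁ - θ₂)| := abs_nonneg _
  refine ⟨h1, h2, by rw [h2]; linarith, fun hs => ?_, fun hle => ?_⟩
  · have : 0 < |Real.sin (θ₁ - θ₂)| := abs_pos.mpr hs
    nlinarith [norm_nonneg U, h2]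
  · have : ‖U‖ ^ 2 ≤ 1 := by nlinarith [norm_nonneg U]
    have : |Real.sin (θ₁ - θ₂)| ≤ 0 := by linarith [h2 ▸ this]
    exact abs_eq_zero.mp (le_antisymm this habs)
end

section
/- (CS decomposition) Let U be an (n+m)×(n+m) unitary complex matrix partitioned into blocks U = [[U11, U12], [U21, U22]] with U11 of size n×n, U12 of size n×m, U21 of size m×n, and U22 of size m×m, and suppose m ≥ n. Then there exist n×n unitary matrices W1, Q1 and m×m unitary matrices W2, Q2, and diagonal n×n matrices C ≥ 0, S ≥ 0 with nonnegative diagonal entries satisfying C² + S² = I_n, such that U = diag(W1, W2) · M · diag(Q1†, Q2†), where M is the (n+m)×(n+m) block matrix with first block row (C, −S, 0), second block row (S, C, 0), and third block row (0, 0, I_{m−n}) (the columns partitioned as n, n, m−n and the rows partitioned as n, n, m−n). -/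
open Matrix
open scoped Matrix.Norms.L2Operator

set_option maxRecDepth 8000

open Matrix Complex

lemma diag_self_mul_conjTranspose {k N : ℕ} (M : Matrix (Fin k) (Fin N) ℂ) (i : Fin k) :
    (M * Mᴴ) i i = ((∑ l, Complex.normSq (M i l) : ℝ) : ℂ) := by
  simp [mul_apply, conjTranspose_apply, mul_comm, Complex.mul_conj]

lemma diag_conjTranspose_mul_self {k N : ℕ} (M : Matrix (Fin N) (Fin k) ℂ) (i : Fin k) :
    (Mᴴ * M) i i = ((∑ l, Complex.normSq (M l i) : ℝ) : ℂ) := by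
  simp [mul_apply, conjTranspose_apply, mul_comm, Complex.mul_conj]

lemma row_eq_zero_of_diag {k N : ℕ} {M : Matrix (Fin k) (Fin N) ℂ} {i : Fin k}
    (h : (M * Mᴴ) i i = 0) (l : Fin N) : M i l = 0 := by
  rw [diag_self_mul_conjTranspose] at h
  have h' : (∑ l, Complex.normSq (M i l) : ℝ) = 0 := by exact_mod_cast h
  have := (Finset.sum_eq_zero_iff_of_nonneg (fun l _ => Complex.normSq_nonneg _)).mp h' l
    (Finset.mem_univ l)
  exact Complex.normSq_eq_zero.mp this

lemma col_eq_zero_of_diag {k N : ℕ} {M : Matrix (Fin N) (Fin k) ℂ} {i : Fin k}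
    (h : (Mᴴ * M) i i = 0) (l : Fin N) : M l i = 0 := by
  rw [diag_conjTranspose_mul_self] at h
  have h' : (∑ l, Complex.normSq (M l i) : ℝ) = 0 := by exact_mod_cast h
  have := (Finset.sum_eq_zero_iff_of_nonneg (fun l _ => Complex.normSq_nonneg _)).mp h' l
    (Finset.mem_univ l)
  exact Complex.normSq_eq_zero.mp this

lemma key_extension {k N : ℕ} (hkN : k ≤ N) (X : Matrix (Fin k) (Fin N) ℂ)
    (d : Fin k → ℝ)
    (hX : X * Xᴴ = diagonal fun i => ((d i : ℂ) ^ 2)) :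
    ∃ Q : Matrix (Fin N) (Fin N) ℂ, Q * Qᴴ = 1 ∧ Qᴴ * Q = 1 ∧
      X * Q = Matrix.of (fun i j => if j.val = i.val then (d i : ℂ) else 0) := by
  classical
  set v : Fin N → EuclideanSpace ℂ (Fin N) := fun j =>
    if h : (j : ℕ) < k then ((d ⟨j, h⟩ : ℂ)⁻¹ • WithLp.toLp 2 (fun l => star (X ⟨j, h⟩ l))) else 0 with hv
  set s : Set (Fin N) := {j | ∃ h : (j : ℕ) < k, d ⟨j, h⟩ ≠ 0} with hs
  have key : ∀ (a b : Fin k), (∑ l, X a l * (starRingEnd ℂ) (X b l))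
      = diagonal (fun i => ((d i : ℂ) ^ 2)) a b := by
    intro a b
    rw [← hX, mul_apply]
    simp only [conjTranspose_apply, starRingEnd_apply]
  have hon : Orthonormal ℂ (s.restrict v) := by
    rw [orthonormal_iff_ite]
    rintro ⟨a, ha, hda⟩ ⟨b, hb, hdb⟩
    simp only [Set.restrict, Set.domRestrict_apply, hv, dif_pos ha, dif_pos hb, inner_smul_left,
      inner_smul_right, PiLp.inner_apply, RCLike.inner_apply, smul_eq_mul,
      PiLp.smul_apply, PiLp.toLp_apply]
    have hsum : (∑ l, star (X ⟨b, hb⟩ l) * (starRingEnd ℂ) (star (X ⟨a, ha⟩ l)))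
        = (starRingEnd ℂ) (∑ l, X ⟨b, hb⟩ l * (starRingEnd ℂ) (X ⟨a, ha⟩ l)) := by
      rw [map_sum]
      refine Finset.sum_congr rfl fun l _ => ?_
      simp only [starRingEnd_apply, star_mul', star_star]
    rw [hsum, key, diagonal_apply]
    by_cases hab : (a : ℕ) = (b : ℕ)
    · have hab' : (⟨b, hb⟩ : Fin k) = ⟨a, ha⟩ := Fin.ext hab.symm
      rw [if_pos hab', if_pos (Subtype.ext (Fin.ext hab))]
      rw [hab']
      have hda' : (d ⟨a, ha⟩ : ℂ) ≠ 0 := by exact_mod_cast hda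
      rw [map_inv₀, Complex.conj_ofReal, map_pow, Complex.conj_ofReal]
      field_simp
    · rw [if_neg (fun hc => hab (Fin.mk.inj_iff.mp hc).symm),
        if_neg (fun hc => hab (congrArg Fin.val (Subtype.mk.inj hc)))]
      simp
  obtain ⟨b, hb⟩ := hon.exists_orthonormalBasis_extension_of_card_eq
    (by simp [finrank_euclideanSpace])
  have hortho : ∀ (j j' : Fin N), (∑ l, (starRingEnd ℂ) (b j l) * b j' l)
      = if j = j' then 1 else 0 := by
    intro j j'
    have := (orthonormal_iff_ite.mp b.orthonormal) j j'
    simpa [PiLp.inner_apply, RCLike.inner_apply, mul_comm] using this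
  refine ⟨Matrix.of fun l j => b j l, ?_, ?_, ?_⟩
  · rw [mul_eq_one_comm]
    ext j j'
    rw [mul_apply, one_apply, ← hortho j j']
    simp only [conjTranspose_apply, of_apply, starRingEnd_apply]
  · ext j j'
    rw [mul_apply, one_apply, ← hortho j j']
    simp only [conjTranspose_apply, of_apply, starRingEnd_apply]
  · ext i j
    simp only [mul_apply, of_apply]
    by_cases hdi : d i = 0
    · have hz : ∀ l, X i l = 0 := by
        intro l
        apply row_eq_zero_of_diag (i := i)
        rw [hX, diagonal_apply_eq, hdi]; simp
      simp [hz, hdi]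
    · set j₀ : Fin N := ⟨i, lt_of_lt_of_le i.2 hkN⟩ with hj₀
      have hj₀s : j₀ ∈ s := ⟨i.2, by simpa using hdi⟩
      have hbj₀ : b j₀ = v j₀ := hb j₀ hj₀s
      have hdi' : (d i : ℂ) ≠ 0 := by exact_mod_cast hdi
      have hXrow : ∀ l, X i l = (d i : ℂ) * (starRingEnd ℂ) (b j₀ l) := by
        intro l
        rw [hbj₀, hv]
        simp only [dif_pos (show (j₀ : ℕ) < k from i.2)]
        have h2 : (⟨(j₀ : ℕ), i.2⟩ : Fin k) = i := Fin.ext rfl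
        rw [h2]
        simp only [PiLp.smul_apply, PiLp.toLp_apply, Pi.smul_apply, smul_eq_mul, starRingEnd_apply, star_mul', star_inv₀,
          star_star]
        rw [show star ((d i : ℂ)) = (d i : ℂ) from Complex.conj_ofReal _]
        field_simp
      calc (∑ l, X i l * b j l) = (d i : ℂ) * ∑ l, (starRingEnd ℂ) (b j₀ l) * b j l := by
            rw [Finset.mul_sum]
            exact Finset.sum_congr rfl fun l _ => by rw [hXrow l]; ring
        _ = (d i : ℂ) * (if j₀ = j then 1 else 0) := by rw [hortho]
        _ = _ := by
            by_cases hj : j.val = i.val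
            · rw [if_pos (Fin.ext hj.symm : j₀ = j), if_pos hj, mul_one]
            · rw [if_neg (fun hc => hj (congrArg Fin.val hc).symm), if_neg hj, mul_zero]

open ComplexOrder in
lemma eig_nonneg_aux {k : ℕ} (A : Matrix (Fin k) (Fin k) ℂ) (h : (A * Aᴴ).IsHermitian)
    (i : Fin k) : 0 ≤ h.eigenvalues i :=
  (posSemidef_self_mul_conjTranspose A).eigenvalues_nonneg i

/-- (CS decomposition) Let `U` be a unitary complex matrix partitioned into blocks with
row/column index type `Fin n ⊕ Fin m` (so `U₁₁` is `n × n`, `U₂₂` is `m × m`), and suppose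
`m ≥ n`.  Then there exist `n × n` unitaries `W₁, Q₁`, `m × m` unitaries `W₂, Q₂`, and
nonnegative diagonal data `C, S : Fin n → ℝ` with `C i ^ 2 + S i ^ 2 = 1`, such that
`U = diag(W₁, W₂) * M * diag(Q₁ᴴ, Q₂ᴴ)`, where `M` is the block matrix with block rows
`(C, -S, 0)`, `(S, C, 0)`, `(0, 0, I_{m-n})` (rows and columns partitioned as
`n, n, m - n`), transported to the index type `Fin n ⊕ Fin m` along the canonical
identification `Fin m ≃ Fin n ⊕ Fin (m - n)`. -/
theorem cs_decomposition {n m : ℕ} (hnm : n ≤ m)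
    (U : Matrix (Fin n ⊕ Fin m) (Fin n ⊕ Fin m) ℂ) (hU : U * Uᴴ = 1) :
    ∃ (W₁ Q₁ : Matrix (Fin n) (Fin n) ℂ) (W₂ Q₂ : Matrix (Fin m) (Fin m) ℂ)
      (C S : Fin n → ℝ),
      W₁ * W₁ᴴ = 1 ∧ Q₁ * Q₁ᴴ = 1 ∧ W₂ * W₂ᴴ = 1 ∧ Q₂ * Q₂ᴴ = 1 ∧
      (∀ i, 0 ≤ C i) ∧ (∀ i, 0 ≤ S i) ∧ (∀ i, C i ^ 2 + S i ^ 2 = 1) ∧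
      U = fromBlocks W₁ 0 0 W₂ *
          (reindex
            ((Equiv.refl (Fin n)).sumCongr
              ((finCongr (Nat.add_sub_cancel' hnm).symm).trans finSumFinEquiv.symm)).symm
            ((Equiv.refl (Fin n)).sumCongr
              ((finCongr (Nat.add_sub_cancel' hnm).symm).trans finSumFinEquiv.symm)).symm
            (fromBlocks
              (diagonal fun i => (C i : ℂ))
              (fromCols (-(diagonal fun i => (S i : ℂ))) 0)
              (fromRows (diagonal fun i => (S i : ℂ)) 0)
              (fromBlocks (diagonal fun i => (C i : ℂ)) 0 0
                (1 : Matrix (Fin (m - n)) (Fin (m - n)) ℂ)))) *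
          fromBlocks Q₁ᴴ 0 0 Q₂ᴴ := by
  classical
  have hU' : Uᴴ * U = 1 := mul_eq_one_comm.mp hU
  set A := U.toBlocks₁₁ with hA0
  set B := U.toBlocks₁₂ with hB0
  set C' := U.toBlocks₂₁ with hC0'
  set D := U.toBlocks₂₂ with hD0'
  have hUblocks : U = fromBlocks A B C' D := (fromBlocks_toBlocks U).symm
  have hrow := hU
  have hcol := hU'
  rw [hUblocks, fromBlocks_conjTranspose, fromBlocks_multiply, ← fromBlocks_one] at hrow hcol
  have h1b : (fromBlocks 1 0 0 1 : Matrix (Fin n ⊕ Fin m) (Fin n ⊕ Fin m) ℂ).toBlocks₁₁ = 1 :=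
    toBlocks_fromBlocks₁₁ _ _ _ _
  have h2b : (fromBlocks 1 0 0 1 : Matrix (Fin n ⊕ Fin m) (Fin n ⊕ Fin m) ℂ).toBlocks₂₁ = 0 :=
    toBlocks_fromBlocks₂₁ _ _ _ _
  have h3b : (fromBlocks 1 0 0 1 : Matrix (Fin n ⊕ Fin m) (Fin n ⊕ Fin m) ℂ).toBlocks₁₂ = 0 :=
    toBlocks_fromBlocks₁₂ _ _ _ _
  have h4b : (fromBlocks 1 0 0 1 : Matrix (Fin n ⊕ Fin m) (Fin n ⊕ Fin m) ℂ).toBlocks₂₂ = 1 :=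
    toBlocks_fromBlocks₂₂ _ _ _ _
  have hr11 : A * Aᴴ + B * Bᴴ = 1 := by
    have := congrArg Matrix.toBlocks₁₁ hrow; rwa [toBlocks_fromBlocks₁₁, h1b] at this
  have hr21 : C' * Aᴴ + D * Bᴴ = 0 := by
    have := congrArg Matrix.toBlocks₂₁ hrow; rwa [toBlocks_fromBlocks₂₁, h2b] at this
  have hc11 : Aᴴ * A + C'ᴴ * C' = 1 := by
    have := congrArg Matrix.toBlocks₁₁ hcol; rwa [toBlocks_fromBlocks₁₁, h1b] at this
  have hc12 : Aᴴ * B + C'ᴴ * D = 0 := by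
    have := congrArg Matrix.toBlocks₁₂ hcol; rwa [toBlocks_fromBlocks₁₂, h3b] at this
  have hc22 : Bᴴ * B + Dᴴ * D = 1 := by
    have := congrArg Matrix.toBlocks₂₂ hcol; rwa [toBlocks_fromBlocks₂₂, h4b] at this
  -- spectral theorem for A Aᴴ
  have hAAH : (A * Aᴴ).IsHermitian := isHermitian_mul_conjTranspose_self A
  set μ : Fin n → ℝ := hAAH.eigenvalues with hμdef
  set W₁ : Matrix (Fin n) (Fin n) ℂ := (hAAH.eigenvectorUnitary : Matrix (Fin n) (Fin n) ℂ) with hW₁def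
  have hW₁' : W₁ᴴ * W₁ = 1 := by
    have := hAAH.eigenvectorUnitary.2
    rw [Unitary.mem_iff] at this
    simpa [star_eq_conjTranspose] using this.1
  have hW₁u : W₁ * W₁ᴴ = 1 := mul_eq_one_comm.mp hW₁'
  have hspec : A * Aᴴ = W₁ * diagonal (fun i => ((μ i : ℝ) : ℂ)) * W₁ᴴ := by
    have := hAAH.spectral_theorem
    exact this
  have hμ0 : ∀ i, 0 ≤ μ i := fun i => eig_nonneg_aux A hAAH i
  have hsand : W₁ᴴ * (W₁ * diagonal (fun i => ((μ i : ℝ) : ℂ)) * W₁ᴴ) * W₁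
      = diagonal (fun i => ((μ i : ℝ) : ℂ)) := by
    rw [← mul_assoc, ← mul_assoc, hW₁', one_mul, mul_assoc, hW₁', mul_one]
  set X : Matrix (Fin n) (Fin m) ℂ := W₁ᴴ * B with hXdef
  have hBB : B * Bᴴ = 1 - A * Aᴴ := eq_sub_of_add_eq' hr11
  have hXX : X * Xᴴ = diagonal (fun i => ((1 - μ i : ℝ) : ℂ)) := by
    have : X * Xᴴ = W₁ᴴ * (B * Bᴴ) * W₁ := by
      rw [hXdef, conjTranspose_mul, conjTranspose_conjTranspose, Matrix.mul_assoc,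
        ← Matrix.mul_assoc B Bᴴ W₁, ← Matrix.mul_assoc]
    rw [this, hBB, hspec]
    rw [mul_sub, sub_mul, mul_one, hW₁', hsand]
    ext i j
    by_cases h : i = j
    · subst h; simp
    · simp [one_apply_ne h, diagonal_apply_ne _ h]
  have h1μ : ∀ i, 0 ≤ 1 - μ i := by
    intro i
    have h1 : (X * Xᴴ) i i = ((∑ l, Complex.normSq (X i l) : ℝ) : ℂ) :=
      diag_self_mul_conjTranspose X i
    rw [hXX, diagonal_apply_eq] at h1
    have h2 : (1 - μ i : ℝ) = ∑ l, Complex.normSq (X i l) := by exact_mod_cast h1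
    rw [h2]
    exact Finset.sum_nonneg fun l _ => Complex.normSq_nonneg _
  set C : Fin n → ℝ := fun i => Real.sqrt (μ i) with hCdef
  set S : Fin n → ℝ := fun i => Real.sqrt (1 - μ i) with hSdef
  have hC0 : ∀ i, 0 ≤ C i := fun i => Real.sqrt_nonneg _
  have hS0 : ∀ i, 0 ≤ S i := fun i => Real.sqrt_nonneg _
  have hC2 : ∀ i, C i ^ 2 = μ i := fun i => Real.sq_sqrt (hμ0 i)
  have hS2 : ∀ i, S i ^ 2 = 1 - μ i := fun i => Real.sq_sqrt (h1μ i)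
  have hCS : ∀ i, C i ^ 2 + S i ^ 2 = 1 := by intro i; rw [hC2, hS2]; ring
  have hdiagμ : diagonal (fun i => ((μ i : ℝ) : ℂ)) = diagonal (fun i => ((C i : ℂ) ^ 2)) := by
    have : (fun i => ((μ i : ℝ) : ℂ)) = fun i => ((C i : ℂ) ^ 2) := by
      funext i; rw [← hC2 i]; push_cast; ring
    rw [this]
  have hdiag1μ : diagonal (fun i => ((1 - μ i : ℝ) : ℂ))
      = diagonal (fun i => ((S i : ℂ) ^ 2)) := by
    have : (fun i => ((1 - μ i : ℝ) : ℂ)) = fun i => ((S i : ℂ) ^ 2) := by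
      funext i; rw [← hS2 i]; push_cast; ring
    rw [this]
  -- SVD of A
  obtain ⟨Q₁, hQ₁u, hQ₁', hAQ⟩ := key_extension (le_refl n) (W₁ᴴ * A) C (by
    have : (W₁ᴴ * A) * (W₁ᴴ * A)ᴴ = W₁ᴴ * (A * Aᴴ) * W₁ := by
      rw [conjTranspose_mul, conjTranspose_conjTranspose, Matrix.mul_assoc,
        ← Matrix.mul_assoc A Aᴴ W₁, ← Matrix.mul_assoc]
    rw [this, hspec, hsand, hdiagμ])
  have hE : (Matrix.of fun (i j : Fin n) => if j.val = i.val then (C i : ℂ) else 0)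
      = diagonal (fun i => (C i : ℂ)) := by
    ext i j
    rw [of_apply, diagonal_apply]
    by_cases h : i = j
    · subst h; simp
    · rw [if_neg (fun hc => h (Fin.ext hc.symm)), if_neg h]
  have hA1 : A = W₁ * diagonal (fun i => (C i : ℂ)) * Q₁ᴴ := by
    have : W₁ * (W₁ᴴ * A * Q₁) * Q₁ᴴ = A := by
      rw [← Matrix.mul_assoc, ← Matrix.mul_assoc, Matrix.mul_assoc W₁ W₁ᴴ A,
        ← Matrix.mul_assoc, hW₁u, one_mul, Matrix.mul_assoc (A) Q₁ Q₁ᴴ, hQ₁u, mul_one]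
    rw [hAQ, hE] at this
    exact this.symm
  -- decomposition of B
  obtain ⟨Q₂, hQ₂u, hQ₂', hXQ'⟩ := key_extension hnm (-X) S (by
    rw [conjTranspose_neg, Matrix.neg_mul, Matrix.mul_neg, neg_neg, hXX, hdiag1μ])
  set D₀ : Matrix (Fin n) (Fin m) ℂ :=
    Matrix.of (fun i j => if j.val = i.val then (S i : ℂ) else 0) with hD₀def
  have hXQ : X * Q₂ = -D₀ := by
    rw [← hXQ', Matrix.neg_mul, neg_neg]
  have hB1 : B = W₁ * (-D₀) * Q₂ᴴ := by
    have hBX : B = W₁ * X := by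
      rw [hXdef, ← Matrix.mul_assoc, hW₁u, Matrix.one_mul]
    have h5 : W₁ * (X * Q₂) * Q₂ᴴ = W₁ * X := by
      rw [Matrix.mul_assoc W₁ (X * Q₂) Q₂ᴴ, Matrix.mul_assoc X Q₂ Q₂ᴴ, hQ₂u, Matrix.mul_one]
    rw [hXQ] at h5
    rw [hBX, ← h5]
  -- reduction helpers
  have redW₁ : ∀ {p : Type} [Fintype p] (M : Matrix (Fin n) p ℂ), W₁ᴴ * (W₁ * M) = M := by
    intro p _ M; rw [← Matrix.mul_assoc, hW₁', Matrix.one_mul]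
  have redW₁' : ∀ {p : Type} [Fintype p] (M : Matrix (Fin n) p ℂ), W₁ * (W₁ᴴ * M) = M := by
    intro p _ M; rw [← Matrix.mul_assoc, hW₁u, Matrix.one_mul]
  have redQ₁ : ∀ {p : Type} [Fintype p] (M : Matrix (Fin n) p ℂ), Q₁ᴴ * (Q₁ * M) = M := by
    intro p _ M; rw [← Matrix.mul_assoc, hQ₁', Matrix.one_mul]
  have redQ₂' : ∀ {p : Type} [Fintype p] (M : Matrix (Fin m) p ℂ), Q₂ * (Q₂ᴴ * M) = M := by
    intro p _ M; rw [← Matrix.mul_assoc, hQ₂u, Matrix.one_mul]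
  have hdCH : (diagonal fun i => (C i : ℂ))ᴴ = diagonal fun i => (C i : ℂ) := by
    rw [diagonal_conjTranspose]
    have : (star fun i => ((C i : ℝ) : ℂ)) = fun i => ((C i : ℝ) : ℂ) :=
      funext fun i => Complex.conj_ofReal _
    rw [this]
  have hCC : (fun i => (C i : ℂ) * (C i : ℂ)) = fun i => ((μ i : ℝ) : ℂ) := by
    funext i; rw [← hC2 i]; push_cast; ring
  -- A-transpose forms
  have hAH : Aᴴ = Q₁ * (diagonal (fun i => (C i : ℂ)) * W₁ᴴ) := by
    rw [hA1]
    simp only [conjTranspose_mul, conjTranspose_conjTranspose, hdCH, Matrix.mul_assoc]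
  have hAHW : Aᴴ * W₁ = Q₁ * diagonal (fun i => (C i : ℂ)) := by
    rw [hAH, Matrix.mul_assoc, Matrix.mul_assoc, hW₁', Matrix.mul_one]
  have hQAH : Q₁ᴴ * Aᴴ = diagonal (fun i => (C i : ℂ)) * W₁ᴴ := by
    rw [hAH, redQ₁]
  have hAHA : Aᴴ * A = Q₁ * (diagonal (fun i => ((μ i : ℝ) : ℂ)) * Q₁ᴴ) := by
    rw [hAH, hA1]
    simp only [Matrix.mul_assoc]
    rw [redW₁, ← Matrix.mul_assoc (diagonal _) (diagonal _), diagonal_mul_diagonal, hCC]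
  set Y : Matrix (Fin m) (Fin n) ℂ := C' * Q₁ with hYdef
  have hCHC : C'ᴴ * C' = 1 - Aᴴ * A := eq_sub_of_add_eq' hc11
  have hYY : Yᴴ * Y = diagonal (fun i => ((1 - μ i : ℝ) : ℂ)) := by
    have e1 : Yᴴ * Y = Q₁ᴴ * ((C'ᴴ * C') * Q₁) := by
      rw [hYdef, conjTranspose_mul]
      simp only [Matrix.mul_assoc]
    rw [e1, hCHC, Matrix.sub_mul, Matrix.one_mul, Matrix.mul_sub, hQ₁', hAHA]
    simp only [Matrix.mul_assoc]
    rw [hQ₁', Matrix.mul_one, redQ₁]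
    rw [← diagonal_one, diagonal_sub]
    funext i
    push_cast
    ring
  -- B-related identities
  have hBHB : Bᴴ * B = Xᴴ * X := by
    have : B = W₁ * X := by rw [hXdef, redW₁']
    rw [this, conjTranspose_mul, Matrix.mul_assoc, redW₁]
  have hCHD : C'ᴴ * D = -(Aᴴ * B) := eq_neg_of_add_eq_zero_right hc12
  have hDBH : D * Bᴴ = -(C' * Aᴴ) := eq_neg_of_add_eq_zero_right hr21
  have hDHD : Dᴴ * D = 1 - Bᴴ * B := eq_sub_of_add_eq' hc22
  have hYD : Yᴴ * (D * Q₂) = diagonal (fun i => (C i : ℂ)) * D₀ := by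
    have e1 : Yᴴ * (D * Q₂) = Q₁ᴴ * (C'ᴴ * D) * Q₂ := by
      rw [hYdef, conjTranspose_mul]
      simp only [Matrix.mul_assoc]
    rw [e1, hCHD, Matrix.mul_neg, Matrix.neg_mul, ← Matrix.mul_assoc, hQAH]
    simp only [Matrix.mul_assoc]
    rw [← Matrix.mul_assoc W₁ᴴ B Q₂, ← hXdef, hXQ, Matrix.mul_neg, neg_neg]
  have hDX : (D * Q₂) * D₀ᴴ = Y * diagonal (fun i => (C i : ℂ)) := by
    have hD₀X : D₀ᴴ = -(Q₂ᴴ * Xᴴ) := by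
      have h := congrArg Matrix.conjTranspose hXQ
      rw [conjTranspose_mul, conjTranspose_neg] at h
      rw [h, neg_neg]
    rw [hD₀X, Matrix.mul_neg, Matrix.mul_assoc D Q₂, redQ₂']
    have hXH : Xᴴ = Bᴴ * W₁ := by rw [hXdef, conjTranspose_mul, conjTranspose_conjTranspose]
    rw [hXH, ← Matrix.mul_assoc D Bᴴ W₁, hDBH, Matrix.neg_mul, neg_neg,
      Matrix.mul_assoc C' Aᴴ W₁, hAHW, ← Matrix.mul_assoc C' Q₁, ← hYdef]
  have hDD : (D * Q₂)ᴴ * (D * Q₂) = 1 - D₀ᴴ * D₀ := by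
    have e1 : (D * Q₂)ᴴ * (D * Q₂) = Q₂ᴴ * ((Dᴴ * D) * Q₂) := by
      rw [conjTranspose_mul]
      simp only [Matrix.mul_assoc]
    rw [e1, hDHD, Matrix.sub_mul, Matrix.one_mul, Matrix.mul_sub, hQ₂', hBHB]
    congr 1
    have hD₀neg : D₀ = -(X * Q₂) := by rw [hXQ, neg_neg]
    rw [hD₀neg, conjTranspose_neg, Matrix.neg_mul, Matrix.mul_neg, neg_neg,
      conjTranspose_mul X Q₂]
    simp only [Matrix.mul_assoc]
  -- entry-level forms of the identities
  have hstarS : ∀ i : Fin n, star ((S i : ℂ)) = (S i : ℂ) := fun i => Complex.conj_ofReal _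
  have hstarSinv : ∀ i : Fin n, star (((S i : ℂ))⁻¹) = ((S i : ℂ))⁻¹ := fun i => by
    rw [star_inv₀, hstarS]
  have hYYe : ∀ a b : Fin n, (∑ l, star (Y l a) * Y l b)
      = diagonal (fun i => ((1 - μ i : ℝ) : ℂ)) a b := by
    intro a b
    rw [← hYY, mul_apply]
    simp only [conjTranspose_apply]
  have hYDe : ∀ (a : Fin n) (b : Fin m), (∑ l, star (Y l a) * (D * Q₂) l b)
      = (diagonal (fun i => (C i : ℂ)) * D₀) a b := by
    intro a b
    rw [← hYD, mul_apply]
    simp only [conjTranspose_apply]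
  have hDDe : ∀ a b : Fin m, (∑ l, star ((D * Q₂) l a) * (D * Q₂) l b)
      = ((1 : Matrix (Fin m) (Fin m) ℂ) - D₀ᴴ * D₀) a b := by
    intro a b
    rw [← hDD, mul_apply]
    simp only [conjTranspose_apply]
  have hDXe : ∀ (l : Fin m) (a : Fin n), (∑ k, (D * Q₂) l k * star (D₀ a k))
      = Y l a * (C a : ℂ) := by
    intro l a
    calc (∑ k, (D * Q₂) l k * star (D₀ a k)) = ((D * Q₂) * D₀ᴴ) l a := by
          rw [mul_apply]; simp only [conjTranspose_apply]
      _ = (Y * diagonal (fun i => (C i : ℂ))) l a := by rw [hDX]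
      _ = Y l a * (C a : ℂ) := Matrix.mul_diagonal _ _ _ _
  have hCD₀e : ∀ (a : Fin n) (b : Fin m), (diagonal (fun i => (C i : ℂ)) * D₀) a b
      = if b.val = a.val then (C a : ℂ) * (S a : ℂ) else 0 := by
    intro a b
    rw [Matrix.diagonal_mul, hD₀def, of_apply, mul_ite, mul_zero]
  have hD₀D₀e : ∀ a b : Fin m, (D₀ᴴ * D₀) a b
      = if h : a.val < n then (if a = b then ((S ⟨a.val, h⟩ : ℂ)) ^ 2 else 0) else 0 := by
    intro a b
    rw [mul_apply]
    simp only [conjTranspose_apply, hD₀def, of_apply]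
    by_cases h : a.val < n
    · rw [dif_pos h, Finset.sum_eq_single (⟨a.val, h⟩ : Fin n)]
      · by_cases hab : a = b
        · subst hab
          simp [hstarS, sq]
        · have hne : ¬ (b.val = a.val) := fun hc => hab (Fin.ext hc.symm)
          simp [hne, hab]
      · intro i _ hi
        rw [if_neg (fun hc : a.val = i.val => hi (Fin.ext hc.symm)), star_zero, zero_mul]
      · intro hmem; exact absurd (Finset.mem_univ _) hmem
    · rw [dif_neg h]
      apply Finset.sum_eq_zero
      intro i _
      rw [if_neg (fun hc : a.val = i.val => h (hc ▸ i.isLt)), star_zero, zero_mul]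
  have hSC1 : ∀ i : Fin n, S i = 0 → (C i : ℂ) = 1 := by
    intro i h
    have h2 : (1 - μ i : ℝ) = 0 := by
      have := hS2 i
      rw [h] at this
      simpa using this.symm
    have h3 : μ i = 1 := by linarith
    have : C i = 1 := by rw [hCdef]; simp only []; rw [h3, Real.sqrt_one]
    rw [this]; norm_num
  have hYzero : ∀ (j : Fin n), S j = 0 → ∀ l, Y l j = 0 := by
    intro j hj l
    refine col_eq_zero_of_diag (M := Y) (i := j) ?_ l
    rw [hYY, diagonal_apply_eq]
    have : (1 - μ j : ℝ) = 0 := by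
      have := hS2 j
      rw [hj] at this
      simpa using this.symm
    rw [this]; simp
  -- definition of W₂
  set W₂ : Matrix (Fin m) (Fin m) ℂ := Matrix.of (fun l j =>
    if h : (j : ℕ) < n then
      (if S ⟨j, h⟩ = 0 then (D * Q₂) l j else Y l ⟨j, h⟩ * ((S ⟨j, h⟩ : ℂ))⁻¹)
    else (D * Q₂) l j) with hW₂def
  have hW₂free : ∀ (l k : Fin m), (∀ h : (k : ℕ) < n, S ⟨k, h⟩ = 0) → W₂ l k = (D * Q₂) l k := by
    intro l k hk
    rw [hW₂def, of_apply]
    by_cases h : (k : ℕ) < n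
    · rw [dif_pos h, if_pos (hk h)]
    · rw [dif_neg h]
  have hW₂forced : ∀ (l : Fin m) (k : Fin m) (h : (k : ℕ) < n), S ⟨k, h⟩ ≠ 0 →
      W₂ l k = Y l ⟨k, h⟩ * ((S ⟨k, h⟩ : ℂ))⁻¹ := by
    intro l k h hS
    rw [hW₂def, of_apply, dif_pos h, if_neg hS]
  -- the mixed sum vanishes
  have hmixed : ∀ (j : Fin n) (k : Fin m), S j ≠ 0 → (∀ h : (k : ℕ) < n, S ⟨k, h⟩ = 0) →
      (∑ l, star (Y l j) * (D * Q₂) l k) = 0 := by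
    intro j k hSj hk
    rw [hYDe, hCD₀e]
    by_cases hc : k.val = j.val
    · exfalso
      have hkn : (k : ℕ) < n := hc ▸ j.isLt
      have : (⟨k.val, hkn⟩ : Fin n) = j := Fin.ext hc
      exact hSj (this ▸ hk hkn)
    · rw [if_neg hc]
  -- unitarity of W₂
  have hW₂' : W₂ᴴ * W₂ = 1 := by
    ext j k
    rw [mul_apply, one_apply]
    simp only [conjTranspose_apply]
    by_cases hjf : ∃ h : (j : ℕ) < n, S ⟨j, h⟩ ≠ 0
    · obtain ⟨hjn, hSj⟩ := hjf
      by_cases hkf : ∃ h : (k : ℕ) < n, S ⟨k, h⟩ ≠ 0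
      · obtain ⟨hkn, hSk⟩ := hkf
        have htrans : ∀ l, star (W₂ l j) * W₂ l k
            = (((S ⟨j, hjn⟩ : ℂ))⁻¹ * ((S ⟨k, hkn⟩ : ℂ))⁻¹)
              * (star (Y l ⟨j, hjn⟩) * Y l ⟨k, hkn⟩) := by
          intro l
          rw [hW₂forced l j hjn hSj, hW₂forced l k hkn hSk, star_mul', hstarSinv]
          ring
        rw [Finset.sum_congr rfl fun l _ => htrans l, ← Finset.mul_sum, hYYe, diagonal_apply]
        by_cases hjk : j = k
        · subst hjk
          rw [if_pos rfl, if_pos rfl]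
          have hSne : ((S ⟨j, hjn⟩ : ℂ)) ≠ 0 := by exact_mod_cast hSj
          have hval : ((1 - μ ⟨j, hjn⟩ : ℝ) : ℂ) = ((S ⟨j, hjn⟩ : ℂ)) ^ 2 := by
            rw [← hS2]; push_cast; ring
          rw [hval]
          have : (⟨(j : ℕ), hkn⟩ : Fin n) = ⟨(j : ℕ), hjn⟩ := rfl
          rw [this]
          field_simp
        · rw [if_neg (fun hc : (⟨j, hjn⟩ : Fin n) = ⟨k, hkn⟩ =>
            hjk (Fin.ext (Fin.mk.inj_iff.mp hc))), if_neg hjk, mul_zero]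
      · push_neg at hkf
        have hjk : j ≠ k := by
          intro h
          subst h
          exact hSj (hkf hjn)
        have htrans : ∀ l, star (W₂ l j) * W₂ l k
            = ((S ⟨j, hjn⟩ : ℂ))⁻¹ * (star (Y l ⟨j, hjn⟩) * (D * Q₂) l k) := by
          intro l
          rw [hW₂forced l j hjn hSj, hW₂free l k hkf, star_mul', hstarSinv]
          ring
        rw [Finset.sum_congr rfl fun l _ => htrans l, ← Finset.mul_sum,
          hmixed ⟨j, hjn⟩ k hSj hkf, mul_zero, if_neg hjk]
    · push_neg at hjf
      by_cases hkf : ∃ h : (k : ℕ) < n, S ⟨k, h⟩ ≠ 0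
      · obtain ⟨hkn, hSk⟩ := hkf
        have hjk : j ≠ k := by
          intro h
          subst h
          exact hSk (hjf hkn)
        have htrans : ∀ l, star (W₂ l j) * W₂ l k
            = ((S ⟨k, hkn⟩ : ℂ))⁻¹ * star (star (Y l ⟨k, hkn⟩) * (D * Q₂) l j) := by
          intro l
          rw [hW₂forced l k hkn hSk, hW₂free l j hjf, star_mul', star_star]
          ring
        rw [Finset.sum_congr rfl fun l _ => htrans l, ← Finset.mul_sum, ← star_sum,
          hmixed ⟨k, hkn⟩ j hSk hjf, star_zero, mul_zero, if_neg hjk]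
      · push_neg at hkf
        have htrans : ∀ l, star (W₂ l j) * W₂ l k
            = star ((D * Q₂) l j) * (D * Q₂) l k := by
          intro l
          rw [hW₂free l j hjf, hW₂free l k hkf]
        rw [Finset.sum_congr rfl fun l _ => htrans l, hDDe, Matrix.sub_apply, hD₀D₀e,
          one_apply]
        by_cases h : j.val < n
        · rw [dif_pos h]
          by_cases hjk : j = k
          · subst hjk
            rw [if_pos rfl, if_pos rfl, hjf h]
            norm_num
          · rw [if_neg hjk, if_neg hjk, sub_zero]
        · rw [dif_neg h, sub_zero]
  have hW₂u : W₂ * W₂ᴴ = 1 := mul_eq_one_comm.mp hW₂'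
  -- the C' block
  have hC'1 : C' = W₂ * D₀ᴴ * Q₁ᴴ := by
    have hCQ : C' * Q₁ = W₂ * D₀ᴴ := by
      ext l j
      have hlhs : (C' * Q₁) l j = Y l j := by rw [hYdef]
      rw [hlhs, mul_apply]
      rw [Finset.sum_eq_single (⟨j.val, lt_of_lt_of_le j.isLt hnm⟩ : Fin m)]
      · have he : (D₀ᴴ) (⟨j.val, lt_of_lt_of_le j.isLt hnm⟩ : Fin m) j = (S j : ℂ) := by
          rw [conjTranspose_apply, hD₀def, of_apply, if_pos rfl, hstarS]
        rw [he]
        by_cases hSj : S j = 0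
        · rw [hYzero j hSj l]
          rw [show ((S j : ℂ)) = 0 by exact_mod_cast hSj, mul_zero]
        · rw [hW₂forced l _ j.isLt (by simpa using hSj)]
          have hSne : ((S j : ℂ)) ≠ 0 := by exact_mod_cast hSj
          field_simp
      · intro b _ hb
        have : ¬ (b.val = j.val) := by
          intro hc
          exact hb (Fin.ext hc)
        rw [conjTranspose_apply, hD₀def, of_apply, if_neg this, star_zero, mul_zero]
      · intro hmem; exact absurd (Finset.mem_univ _) hmem
    have : C' * Q₁ * Q₁ᴴ = C' := by
      rw [Matrix.mul_assoc, hQ₁u, Matrix.mul_one]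
    rw [← this, hCQ]
  -- the D block
  set g : Fin m → ℂ := fun j => if h : (j : ℕ) < n then (C ⟨j, h⟩ : ℂ) else 1 with hgdef
  have hD1 : D = W₂ * diagonal g * Q₂ᴴ := by
    have hDQ : D * Q₂ = W₂ * diagonal g := by
      ext l j
      rw [Matrix.mul_diagonal]
      by_cases hjn : (j : ℕ) < n
      · by_cases hSj : S ⟨j, hjn⟩ = 0
        · rw [hW₂free l j (fun h => hSj), hgdef]
          simp only []
          rw [dif_pos hjn, hSC1 _ hSj, mul_one]
        · rw [hW₂forced l j hjn hSj, hgdef]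
          simp only []
          rw [dif_pos hjn]
          have hsum := hDXe l ⟨j, hjn⟩
          rw [Finset.sum_eq_single j] at hsum
          · rw [hD₀def, of_apply, if_pos rfl, hstarS] at hsum
            have hSne : ((S ⟨j, hjn⟩ : ℂ)) ≠ 0 := by exact_mod_cast hSj
            field_simp
            linear_combination hsum
          · intro b _ hb
            have : ¬ (b.val = j.val) := fun hc => hb (Fin.ext hc)
            rw [hD₀def, of_apply, if_neg this, star_zero, mul_zero]
          · intro hmem; exact absurd (Finset.mem_univ _) hmem
      · rw [hW₂free l j (fun h => absurd h hjn), hgdef]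
        simp only []
        rw [dif_neg hjn, mul_one]
    have : D * Q₂ * Q₂ᴴ = D := by
      rw [Matrix.mul_assoc, hQ₂u, Matrix.mul_one]
    rw [← this, hDQ]
  -- the split helper
  have hsplit : ∀ j : Fin m,
      ((finCongr (Nat.add_sub_cancel' hnm).symm).trans finSumFinEquiv.symm) j
      = if h : (j : ℕ) < n then Sum.inl (⟨j.val, h⟩ : Fin n)
        else Sum.inr (⟨j.val - n, by omega⟩ : Fin (m - n)) := by
    intro j
    rw [Equiv.trans_apply, Equiv.symm_apply_eq]
    by_cases h : (j : ℕ) < n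
    · rw [dif_pos h, finSumFinEquiv_apply_left]
      exact Fin.ext (by simp)
    · rw [dif_neg h, finSumFinEquiv_apply_right]
      refine Fin.ext ?_
      simp only [finCongr_apply, Fin.coe_cast, Fin.coe_natAdd]
      omega
  have hR : (reindex
        ((Equiv.refl (Fin n)).sumCongr
          ((finCongr (Nat.add_sub_cancel' hnm).symm).trans finSumFinEquiv.symm)).symm
        ((Equiv.refl (Fin n)).sumCongr
          ((finCongr (Nat.add_sub_cancel' hnm).symm).trans finSumFinEquiv.symm)).symm
        (fromBlocks
          (diagonal fun i => (C i : ℂ))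
          (fromCols (-(diagonal fun i => (S i : ℂ))) 0)
          (fromRows (diagonal fun i => (S i : ℂ)) 0)
          (fromBlocks (diagonal fun i => (C i : ℂ)) 0 0
            (1 : Matrix (Fin (m - n)) (Fin (m - n)) ℂ))))
      = fromBlocks (diagonal (fun i => (C i : ℂ))) (-D₀) D₀ᴴ (diagonal g) := by
    ext x y
    rw [reindex_apply, submatrix_apply, Equiv.symm_symm]
    cases x with
    | inl i =>
      cases y with
      | inl j =>
        simp only [Equiv.sumCongr_apply, Sum.map_inl, Equiv.refl_apply,
          fromBlocks_apply₁₁]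
      | inr j =>
        simp only [Equiv.sumCongr_apply, Sum.map_inl, Sum.map_inr, Equiv.refl_apply,
          fromBlocks_apply₁₂, hsplit j]
        by_cases h : (j : ℕ) < n
        · rw [dif_pos h, fromCols_apply_inl]
          simp only [Matrix.neg_apply, diagonal_apply, hD₀def, of_apply]
          by_cases hij : j.val = i.val
          · rw [if_pos (Fin.ext (hij.symm : i.val = (⟨j.val, h⟩ : Fin n).val)), if_pos hij]
          · rw [if_neg (fun hc : i = ⟨j.val, h⟩ => hij (congrArg Fin.val hc).symm),
              if_neg hij, neg_zero]
        · rw [dif_neg h, fromCols_apply_inr]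
          have : ¬ (j.val = i.val) := fun hc => h (hc ▸ i.isLt)
          simp only [Matrix.zero_apply, Matrix.neg_apply, hD₀def, of_apply, if_neg this,
            neg_zero]
    | inr l =>
      cases y with
      | inl j =>
        simp only [Equiv.sumCongr_apply, Sum.map_inl, Sum.map_inr, Equiv.refl_apply,
          fromBlocks_apply₂₁, hsplit l]
        rw [conjTranspose_apply, hD₀def, of_apply]
        by_cases h : (l : ℕ) < n
        · rw [dif_pos h, fromRows_apply_inl]
          rw [diagonal_apply]
          by_cases hlj : l.val = j.val
          · rw [if_pos (Fin.ext hlj : (⟨l.val, h⟩ : Fin n) = j), if_pos hlj, hstarS]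
            rw [show (⟨l.val, h⟩ : Fin n) = j from Fin.ext hlj]
          · rw [if_neg (fun hc : (⟨l.val, h⟩ : Fin n) = j => hlj (congrArg Fin.val hc)),
              if_neg hlj, star_zero]
        · rw [dif_neg h, fromRows_apply_inr]
          have : ¬ (l.val = j.val) := fun hc => h (hc ▸ j.isLt)
          rw [if_neg this, star_zero, Matrix.zero_apply]
      | inr j =>
        simp only [Equiv.sumCongr_apply, Sum.map_inr, fromBlocks_apply₂₂, hsplit l,
          hsplit j]
        rw [diagonal_apply, hgdef]
        simp only []
        by_cases hl : (l : ℕ) < n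
        · rw [dif_pos hl]
          by_cases hj : (j : ℕ) < n
          · rw [dif_pos hj, fromBlocks_apply₁₁, diagonal_apply]
            by_cases hlj : l = j
            · subst hlj
              rw [if_pos rfl, if_pos rfl, dif_pos hl]
            · rw [if_neg (fun hc : (⟨l.val, hl⟩ : Fin n) = ⟨j.val, hj⟩ =>
                hlj (Fin.ext (Fin.mk.inj_iff.mp hc))), if_neg hlj]
          · rw [dif_neg hj, fromBlocks_apply₁₂, Matrix.zero_apply]
            have : ¬ (l = j) := fun hc => hj (hc ▸ hl)
            rw [if_neg this]
        · rw [dif_neg hl]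
          by_cases hj : (j : ℕ) < n
          · rw [dif_pos hj, fromBlocks_apply₂₁, Matrix.zero_apply]
            have : ¬ (l = j) := fun hc => hl (hc ▸ hj)
            rw [if_neg this]
          · rw [dif_neg hj, fromBlocks_apply₂₂, one_apply]
            have hiff : ((⟨l.val - n, by omega⟩ : Fin (m - n)) = ⟨j.val - n, by omega⟩)
                ↔ l = j := by
              rw [Fin.mk.inj_iff, Fin.ext_iff]
              omega
            by_cases hlj : l = j
            · rw [if_pos (hiff.mpr hlj), if_pos hlj, dif_neg hl]
            · rw [if_neg (fun hc => hlj (hiff.mp hc)), if_neg hlj]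
  refine ⟨W₁, Q₁, W₂, Q₂, C, S, hW₁u, hQ₁u, hW₂u, hQ₂u, hC0, hS0, hCS, ?_⟩
  rw [hR]
  rw [fromBlocks_multiply, fromBlocks_multiply]
  simp only [Matrix.zero_mul, Matrix.mul_zero, add_zero, zero_add]
  rw [← hA1]
  rw [show W₁ * -D₀ * Q₂ᴴ = B from hB1.symm, show W₂ * D₀ᴴ * Q₁ᴴ = C' from hC'1.symm,
    show W₂ * diagonal g * Q₂ᴴ = D from hD1.symm]
  exact hUblocks
end
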